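/- For every natural number n, the centered period-4 alternating window sum of row n of the 3-Pascal triangle with offset 2 equals 1: Σ_{j∈ℤ} [ T(n, 4j) − T(n, 4j + 2) ] = 1. -/

import Mathlib

open Polynomial in
/-- Trinomial coefficient `T(n, k)`: the coefficient of `x^(n+k)` in `(1 + x + x²)^n`
over `ℤ` (the entries of the 3-Pascal triangle), with `T(n, k) = 0` for `|k| > n`. -/
noncomputable def trinom (n : ℕ) (k : ℤ) : ℤ :=
  if 0 ≤ (n : ℤ) + k then ((1 + X + X ^ 2 : Polynomial ℤ) ^ n).coeff ((n : ℤ) + k).toNat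
  else 0

open Polynomial

/-- Integer-indexed coefficient. -/
noncomputable def czz (p : Polynomial ℤ) (i : ℤ) : ℤ :=
  if 0 ≤ i then p.coeff i.toNat else 0

lemma trinom_eq_czz (n : ℕ) (k : ℤ) :
    trinom n k = czz ((1 + X + X ^ 2 : Polynomial ℤ) ^ n) ((n : ℤ) + k) := rfl

lemma czz_mul_trinomial (p : Polynomial ℤ) (i : ℤ) :
    czz (p * (1 + X + X ^ 2)) i = czz p i + czz p (i - 1) + czz p (i - 2) := by
  have hmul : ∀ m : ℕ, (p * (1 + X + X ^ 2)).coeff m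
      = p.coeff m + (p * X).coeff m + (p * X ^ 2).coeff m := by
    intro m
    rw [mul_add, mul_add, mul_one, coeff_add, coeff_add]
  unfold czz
  rcases lt_or_ge i 0 with h | h
  · rw [if_neg (by omega), if_neg (by omega), if_neg (by omega), if_neg (by omega)]
    ring
  · obtain ⟨m, rfl⟩ := Int.eq_ofNat_of_zero_le h
    match m with
    | 0 =>
      rw [if_pos h, if_neg (by omega : ¬ (0:ℤ) ≤ ((0:ℕ):ℤ) - 1),
        if_neg (by omega : ¬ (0:ℤ) ≤ ((0:ℕ):ℤ) - 2)]
      simp [hmul, coeff_mul_X_pow']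
    | 1 =>
      have h1 : ((1 : ℕ) : ℤ) - 1 = ((0 : ℕ) : ℤ) := by norm_num
      have h2 : ¬ (0 : ℤ) ≤ ((1 : ℕ) : ℤ) - 2 := by norm_num
      rw [if_pos (by positivity), if_pos (by positivity), h1, if_pos (by positivity),
        if_neg h2, hmul]
      have : (p * X).coeff 1 = p.coeff 0 := by
        simpa using coeff_mul_X p 0
      simp [this, coeff_mul_X_pow', Int.toNat_natCast]
    | (m + 2) =>
      have e0 : (((m + 2 : ℕ) : ℤ)).toNat = m + 2 := by omega
      have e1 : (((m + 2 : ℕ) : ℤ) - 1).toNat = m + 1 := by omega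
      have e2 : (((m + 2 : ℕ) : ℤ) - 2).toNat = m := by omega
      rw [if_pos (by positivity), if_pos (by positivity), if_pos (by omega),
        if_pos (by omega), e0, e1, e2, hmul]
      have hx : (p * X).coeff (m + 2) = p.coeff (m + 1) := coeff_mul_X p (m + 1)
      have hx2 : (p * X ^ 2).coeff (m + 2) = p.coeff m := by
        simpa using coeff_mul_X_pow p 2 m
      rw [hx, hx2]

lemma trinom_succ (n : ℕ) (k : ℤ) :
    trinom (n + 1) k = trinom n (k - 1) + trinom n k + trinom n (k + 1) := by
  rw [trinom_eq_czz, trinom_eq_czz, trinom_eq_czz, trinom_eq_czz, pow_succ,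
    czz_mul_trinomial]
  have e1 : ((n + 1 : ℕ) : ℤ) + k - 1 = (n : ℤ) + k := by push_cast; ring
  have e2 : ((n + 1 : ℕ) : ℤ) + k - 2 = (n : ℤ) + (k - 1) := by push_cast; ring
  have e3 : ((n + 1 : ℕ) : ℤ) + k = (n : ℤ) + (k + 1) := by push_cast; ring
  rw [e1, e2, e3]
  ring

lemma trinom_eq_zero_of_gt {n : ℕ} {k : ℤ} (h : (n : ℤ) < k) : trinom n k = 0 := by
  unfold trinom
  split_ifs with h0
  · apply coeff_eq_zero_of_natDegree_lt
    have hd : ((1 + X + X ^ 2 : Polynomial ℤ) ^ n).natDegree ≤ 2 * n := by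
      refine le_trans (natDegree_pow_le) ?_
      have : (1 + X + X ^ 2 : Polynomial ℤ).natDegree ≤ 2 := by
        compute_degree
      nlinarith
    have : (2 * n : ℤ) < (n : ℤ) + k := by omega
    omega
  · rfl

lemma trinom_eq_zero_of_lt {n : ℕ} {k : ℤ} (h : k < -(n : ℤ)) : trinom n k = 0 := by
  unfold trinom
  rw [if_neg (by omega)]

lemma supp_finite (n : ℕ) (b : ℤ) :
    (Function.support fun j : ℤ => trinom n (4 * j + b)).Finite := by
  have hsub : (Function.support fun j : ℤ => trinom n (4 * j + b))
      ⊆ (fun j : ℤ => 4 * j + b) ⁻¹' Set.Icc (-(n : ℤ)) n := by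
    intro j hj
    simp only [Function.mem_support] at hj
    simp only [Set.mem_preimage, Set.mem_Icc]
    constructor
    · by_contra h
      exact hj (trinom_eq_zero_of_lt (by omega))
    · by_contra h
      exact hj (trinom_eq_zero_of_gt (by omega))
  refine Set.Finite.subset (Set.Finite.preimage ?_ (Set.finite_Icc _ _)) hsub
  intro x _ y _ hxy
  have h4 : 4 * x + b = 4 * y + b := hxy
  omega

/-- The centered period-4 alternating window sum of row n of the 3-Pascal triangle
with offset 2 equals 1. -/
theorem trinomial_period_four_window_sum (n : ℕ) :
    ∑ᶠ j : ℤ, (trinom n (4 * j) - trinom n (4 * j + 2)) = 1 := by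
  induction n with
  | zero =>
    rw [finsum_eq_single _ (0 : ℤ)]
    · have h2 : trinom 0 (4 * 0 + 2) = 0 := trinom_eq_zero_of_gt (by norm_num)
      rw [h2]
      norm_num [trinom]
    · intro j hj
      have h1 : trinom 0 (4 * j) = 0 := by
        rcases lt_or_gt_of_ne hj with h | h
        · exact trinom_eq_zero_of_lt (by push_cast; omega)
        · exact trinom_eq_zero_of_gt (by push_cast; omega)
      have h2 : trinom 0 (4 * j + 2) = 0 := by
        rcases lt_or_ge j 0 with h | h
        · exact trinom_eq_zero_of_lt (by push_cast; omega)
        · exact trinom_eq_zero_of_gt (by push_cast; omega)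
      rw [h1, h2, sub_zero]
  | succ n ih =>
    have key : ∀ j : ℤ, trinom (n + 1) (4 * j) - trinom (n + 1) (4 * j + 2)
        = (trinom n (4 * j) - trinom n (4 * j + 2))
          + (trinom n (4 * j + (-1)) - trinom n (4 * j + 3)) := by
      intro j
      rw [trinom_succ, trinom_succ, show 4 * j + 2 - 1 = 4 * j + 1 from by ring,
        show 4 * j + 2 + 1 = 4 * j + 3 from by ring, show 4 * j - 1 = 4 * j + (-1) from by ring]
      ring
    rw [finsum_congr key, finsum_add_distrib, ih]
    · have h3 : ∑ᶠ j : ℤ, (trinom n (4 * j + (-1)) - trinom n (4 * j + 3)) = 0 := by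
        rw [finsum_sub_distrib (supp_finite n (-1)) (supp_finite n 3)]
        have : ∑ᶠ j : ℤ, trinom n (4 * j + (-1))
            = ∑ᶠ j : ℤ, trinom n (4 * j + 3) := by
          rw [← finsum_comp_equiv (Equiv.addRight (1 : ℤ))
            (f := fun j : ℤ => trinom n (4 * j + (-1)))]
          apply finsum_congr
          intro j
          simp only [Equiv.coe_addRight]
          congr 1
          ring
        rw [this, sub_self]
      rw [h3, add_zero]
    · have s0 : (Function.support fun j : ℤ => trinom n (4 * j)).Finite := by
        have := supp_finite n 0
        simpa using this
      exact Set.Finite.subset (s0.union (supp_finite n 2)) (Function.support_sub _ _)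
    · exact Set.Finite.subset ((supp_finite n (-1)).union (supp_finite n 3))
        (Function.support_sub _ _)
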